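/- Let c and e be tripotents in a JB*-triple V. Then c ≤ e (i.e., e − c is a tripotent orthogonal to c) if and only if {c,e,c} + {c,c,e} = 2c. -/

import Mathlib

open scoped ComplexConjugate

class JBStarTriple (V : Type*) [NormedAddCommGroup V] [NormedSpace ℂ V] where
  tp : V → V → V → V
  box : V → V → V →L[ℂ] V
  box_apply : ∀ a b x : V, box a b x = tp a b x
  add_fst : ∀ a a' b c : V, tp (a + a') b c = tp a b c + tp a' b c
  smul_fst : ∀ (α : ℂ) (a b c : V), tp (α • a) b c = α • tp a b c
  symm_outer : ∀ a b c : V, tp a b c = tp c b a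
  add_snd : ∀ a b b' c : V, tp a (b + b') c = tp a b c + tp a b' c
  conj_snd : ∀ (α : ℂ) (a b c : V), tp a (α • b) c = conj α • tp a b c
  jordan_identity : ∀ a b x y z : V,
    tp a b (tp x y z) = tp (tp a b x) y z - tp x (tp b a y) z + tp x y (tp a b z)
  hermitian : ∀ (a : V) (t : ℝ), ‖NormedSpace.exp ((Complex.I * (t : ℂ)) • box a a)‖ = 1
  nonneg_spectrum : ∀ a : V, spectrum ℂ (box a a) ⊆ {z : ℂ | 0 ≤ z.re ∧ z.im = 0}
  norm_tp_le : ∀ a b c : V, ‖tp a b c‖ ≤ ‖a‖ * ‖b‖ * ‖c‖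
  norm_tp_self : ∀ a : V, ‖tp a a a‖ = ‖a‖ ^ 3

namespace JBStarTriple

variable {V : Type*} [NormedAddCommGroup V] [NormedSpace ℂ V] [JBStarTriple V]

def IsTripotent (e : V) : Prop := tp e e e = e

def Orthogonal (a b : V) : Prop := ∀ x : V, tp a b x = 0

def IsMinimalTripotent (e : V) : Prop :=
  IsTripotent e ∧ e ≠ 0 ∧ ∀ v : V, ∃ α : ℂ, tp e v e = α • e

def Peirce2 (e : V) : Set V := {x : V | tp e e x = x}

/-- `c ≤ e` for tripotents: `e - c` is a tripotent orthogonal to `c`. -/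
def TripLE (c e : V) : Prop := IsTripotent (e - c) ∧ Orthogonal (e - c) c

/-- The box operator as a `ℂ`-linear map. -/
def boxL (x y : V) : V →ₗ[ℂ] V where
  toFun v := tp x y v
  map_add' u v := by
    show tp x y (u + v) = tp x y u + tp x y v
    rw [symm_outer x y (u + v), add_fst, ← symm_outer x y u, ← symm_outer x y v]
  map_smul' α v := by
    show tp x y (α • v) = α • tp x y v
    rw [symm_outer x y (α • v), smul_fst, ← symm_outer x y v]

/-- The trace inner product `⟨x, y⟩ = Tr (x □ y)`. -/
noncomputable def trform (x y : V) : ℂ := LinearMap.trace ℂ V (boxL x y)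

end JBStarTriple

open JBStarTriple

namespace JBStarTripleAux

open JBStarTriple

variable {V : Type*} [NormedAddCommGroup V] [NormedSpace ℂ V] [JBStarTriple V]

lemma tpa₁ (x y b z : V) : tp (x + y) b z = tp x b z + tp y b z := add_fst x y b z

lemma tpa₂ (a x y z : V) : tp a (x + y) z = tp a x z + tp a y z := add_snd a x y z

lemma tpa₃ (a b x y : V) : tp a b (x + y) = tp a b x + tp a b y := by
  rw [symm_outer a b (x + y), add_fst, symm_outer x b a, symm_outer y b a]

lemma tp_zero₁ (b z : V) : tp (0 : V) b z = 0 := by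
  have h := smul_fst (0 : ℂ) (0 : V) b z
  simpa using h

lemma tp_zero₂ (a z : V) : tp a (0 : V) z = 0 := by
  have h := conj_snd (0 : ℂ) a (0 : V) z
  simpa using h

lemma tp_zero₃ (a b : V) : tp a b (0 : V) = 0 := by
  rw [symm_outer a b (0 : V), tp_zero₁]

lemma tp_neg₁ (x b z : V) : tp (-x) b z = -(tp x b z) := by
  have h := smul_fst (-1 : ℂ) x b z
  simpa using h

lemma tp_neg₂ (a x z : V) : tp a (-x) z = -(tp a x z) := by
  have h := conj_snd (-1 : ℂ) a x z
  simpa using h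

lemma tp_neg₃ (a b x : V) : tp a b (-x) = -(tp a b x) := by
  rw [symm_outer a b (-x), tp_neg₁, symm_outer x b a]

lemma tp_sub₁ (x y b z : V) : tp (x - y) b z = tp x b z - tp y b z := by
  rw [sub_eq_add_neg, tpa₁, tp_neg₁, sub_eq_add_neg]

lemma tp_sub₂ (a x y z : V) : tp a (x - y) z = tp a x z - tp a y z := by
  rw [sub_eq_add_neg, tpa₂, tp_neg₂, sub_eq_add_neg]

lemma tp_sub₃ (a b x y : V) : tp a b (x - y) = tp a b x - tp a b y := by
  rw [sub_eq_add_neg, tpa₃, tp_neg₃, sub_eq_add_neg]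

/-- If the triple cube of `w` vanishes, then `w = 0`. -/
lemma eq_zero_of_cube {w : V} (h : tp w w w = 0) : w = 0 := by
  have h2 := norm_tp_self (V := V) w
  rw [h, norm_zero] at h2
  have h3 : ‖w‖ = 0 := pow_eq_zero_iff (n := 3) (by norm_num) |>.mp h2.symm
  exact norm_eq_zero.mp h3

/-- Orthogonality is symmetric: `a □ b = 0` implies `b □ a = 0`. -/
lemma box_symm_zero {A B : V} (h : ∀ x, tp A B x = 0) : ∀ y, tp B A y = 0 := by
  intro y
  have key : ∀ x z : V, tp x (tp B A y) z = 0 := by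
    intro x z
    have J := jordan_identity A B x y z
    rw [h (tp x y z), h x, h z, tp_zero₁, tp_zero₃] at J
    linear_combination (norm := module) J
  exact eq_zero_of_cube (key _ _)

section Tripotent

variable {c : V} (hc : tp c c c = c)
include hc

/-- `D ∘ Q = Q` for a tripotent. -/
lemma LDQ (x : V) : tp c c (tp c x c) = tp c x c := by
  have I1 := jordan_identity c c c x c
  rw [hc] at I1
  have I2 := jordan_identity c x c c c
  rw [hc] at I2
  rw [symm_outer (tp c x c) c c, symm_outer x c c] at I2
  have h3 : (3 : ℂ) • tp c c (tp c x c) = (3 : ℂ) • tp c x c := by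
    linear_combination (norm := module) I1 - I2
  exact smul_right_injective V (by norm_num : (3 : ℂ) ≠ 0) h3

/-- `Q ∘ D = Q` for a tripotent. -/
lemma LQD (x : V) : tp c (tp c c x) c = tp c x c := by
  have I1 := jordan_identity c c c x c
  rw [hc] at I1
  have h2 := LDQ hc x
  linear_combination (norm := module) I1 - h2

/-- `Q² + D = 2 D²` for a tripotent. -/
lemma LQQ (x : V) :
    tp c (tp c x c) c + tp c c x = tp c c (tp c c x) + tp c c (tp c c x) := by
  have J := jordan_identity x c c c c
  rw [hc] at J
  rw [symm_outer x c c] at J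
  rw [symm_outer (tp c c x) c c] at J
  linear_combination (norm := module) J

/-- The cubic identity `2 D³ + D = 3 D²` for a tripotent. -/
lemma Lcubic (x : V) :
    tp c c (tp c c (tp c c x)) + tp c c (tp c c (tp c c x)) + tp c c x
      = tp c c (tp c c x) + tp c c (tp c c x) + tp c c (tp c c x) := by
  have h1 := LQQ hc (tp c c x)
  rw [LQD hc x] at h1
  have h2 := LQQ hc x
  linear_combination (norm := module) h2 - h1

section Zero

variable {y : V} (hy : tp c c y = 0)
include hy

lemma c2 (z : V) : tp c c (tp c y z) = tp c y (tp c c z) + tp c y z := by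
  have J := jordan_identity c c c y z
  rw [hc, hy, tp_zero₂] at J
  linear_combination (norm := module) J

lemma c1 (z : V) : tp c c (tp y c z) = tp y c (tp c c z) - tp y c z := by
  have J := jordan_identity c c y c z
  rw [hc, hy, tp_zero₁] at J
  linear_combination (norm := module) J

lemma TD2 (z : V) : tp c y (tp c c (tp c c z)) = 0 := by
  have h1 := c2 hc hy z
  have h1' := c2 hc hy (tp c c z)
  have h1'' := c2 hc hy (tp c c (tp c c z))
  have g1 : tp c c (tp c c (tp c y z))
      = (tp c y (tp c c (tp c c z)) + tp c y (tp c c z))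
        + (tp c y (tp c c z) + tp c y z) := by
    rw [h1, tpa₃, h1', h1]
  have g2 : tp c c (tp c c (tp c c (tp c y z)))
      = ((tp c y (tp c c (tp c c (tp c c z))) + tp c y (tp c c (tp c c z)))
          + (tp c y (tp c c (tp c c z)) + tp c y (tp c c z)))
        + ((tp c y (tp c c (tp c c z)) + tp c y (tp c c z))
          + (tp c y (tp c c z) + tp c y z)) := by
    rw [g1]
    simp only [tpa₃]
    rw [h1'', h1', h1]
  have e1 := Lcubic hc (tp c y z)
  have e2 := Lcubic hc z
  have f2 := congrArg (fun w => tp c y w) e2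
  simp only [tpa₃] at f2
  linear_combination (norm := module)
    ((1:ℂ)/6) • e1 - ((1:ℂ)/6) • f2 + ((1:ℂ)/2) • g1 - ((1:ℂ)/3) • g2 - ((1:ℂ)/6) • h1

lemma TD0 (z : V) : tp c y (tp c c z) = 0 := by
  have e2 := Lcubic hc z
  have f2 := congrArg (fun w => tp c y w) e2
  simp only [tpa₃] at f2
  have k1 := TD2 hc hy z
  have k2 := TD2 hc hy (tp c c z)
  linear_combination (norm := module) f2 - (2:ℂ) • k2 + (3:ℂ) • k1

lemma SD2 (z : V) :
    tp y c (tp c c (tp c c z)) + tp y c z = tp y c (tp c c z) + tp y c (tp c c z) := by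
  have h1 := c1 hc hy z
  have h1' := c1 hc hy (tp c c z)
  have h1'' := c1 hc hy (tp c c (tp c c z))
  have g1 : tp c c (tp c c (tp y c z))
      = (tp y c (tp c c (tp c c z)) - tp y c (tp c c z))
        - (tp y c (tp c c z) - tp y c z) := by
    rw [h1, tp_sub₃, h1', h1]
  have g2 : tp c c (tp c c (tp y c z))
      = tp c c (tp c c (tp y c z)) := rfl
  have g2' : tp c c (tp c c (tp c c (tp y c z)))
      = ((tp y c (tp c c (tp c c (tp c c z))) - tp y c (tp c c (tp c c z)))
          - (tp y c (tp c c (tp c c z)) - tp y c (tp c c z)))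
        - ((tp y c (tp c c (tp c c z)) - tp y c (tp c c z))
          - (tp y c (tp c c z) - tp y c z)) := by
    rw [g1]
    simp only [tp_sub₃]
    rw [h1'', h1', h1]
  have e1 := Lcubic hc (tp y c z)
  have e2 := Lcubic hc z
  have f2 := congrArg (fun w => tp y c w) e2
  simp only [tpa₃] at f2
  linear_combination (norm := module)
    (-(1:ℂ)/6) • e1 + ((1:ℂ)/6) • f2 - ((1:ℂ)/2) • g1 + ((1:ℂ)/3) • g2' + ((1:ℂ)/6) • h1

lemma SD (z : V) : tp y c (tp c c z) = tp y c z := by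
  have B := congrArg (fun w => tp y c w) (Lcubic hc z)
  simp only [tpa₃] at B
  have C := SD2 hc hy z
  have C' := SD2 hc hy (tp c c z)
  linear_combination (norm := module) B - (2:ℂ) • C' - C

/-- If `y ∈ V₀(c)` then `y □ c = 0`. -/
lemma orthA (z : V) : tp y c z = 0 := by
  have hq := LQQ hc z
  have hq' := congrArg (fun w => tp y c w) hq
  simp only [tpa₃] at hq'
  rw [SD hc hy z, SD hc hy (tp c c z)] at hq'
  have hSQ : ∀ w : V, tp y c (tp c w c) = -(tp c (tp c y w) c) := by
    intro w
    have J := jordan_identity y c c w c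
    rw [symm_outer y c c, hy, tp_zero₁, tp_zero₃] at J
    linear_combination (norm := module) J
  have hTQ : ∀ w : V, tp c y (tp c w c) = 0 := by
    intro w
    have h := TD0 hc hy (tp c w c)
    rwa [LDQ hc w] at h
  have h1 := hSQ (tp c z c)
  rw [hTQ z, tp_zero₂] at h1
  have hsd := SD hc hy z
  linear_combination (norm := module) -hq' - (2:ℂ) • hsd + h1

end Zero

/-- If `a ∈ V₂(c)` is skew (`Q a = -a`) and `c + a` is a tripotent, then `a = 0`. -/
lemma skew_zero {a : V} (hDa : tp c c a = a) (hQa : tp c a c = -a)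
    (hf3 : tp (c + a) (c + a) (c + a) = c + a) : a = 0 := by
  have hacc : tp a c c = a := by rw [symm_outer a c c, hDa]
  have hDsq : tp c c (tp a c a) = tp a c a := by
    have J := jordan_identity c c a c a
    rw [hc, hDa] at J
    linear_combination (norm := module) J
  -- tp a a c = - tp a c a
  have haac : tp a a c = -(tp a c a) := by
    have J := jordan_identity a c a c c
    rw [hQa, tp_neg₂, symm_outer (tp a c a) c c, hDsq, hacc] at J
    linear_combination (norm := module) -J
  -- tp c a a = - tp a c a
  have hcaa : tp c a a = -(tp a c a) := by
    have J := jordan_identity a c c c a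
    rw [hacc, hQa, tp_neg₂, hDa, hDsq] at J
    linear_combination (norm := module) -J
  -- tp a a a = tp a c a   (from tripotency of c + a)
  have haaa : tp a a a = tp a c a := by
    have h0 := hf3
    simp only [tpa₁, tpa₂, tpa₃] at h0
    rw [hc, hDa, hQa, hacc, hcaa, haac] at h0
    linear_combination (norm := module) h0
  -- tp (tp a c a) c a = - tp a c a
  have hacsq : tp (tp a c a) c a = -(tp a c a) := by
    have J := jordan_identity a c a c a
    rw [hQa, tp_neg₂, haaa] at J
    linear_combination (norm := module) -J
  -- tp a a (tp a c a) = - tp (tp a c a) c (tp a c a)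
  have haasq : tp a a (tp a c a) = -(tp (tp a c a) c (tp a c a)) := by
    have J := jordan_identity a c a c (tp a c a)
    rw [hQa, tp_neg₂] at J
    linear_combination (norm := module) -J
  -- Q (tp a c a) = tp a c a
  have hq2 : tp c (tp a c a) c = tp a c a := by
    have J := jordan_identity c a c a c
    rw [hQa, tp_neg₁, tp_neg₃] at J
    linear_combination (norm := module) J - haac
  -- tp a (tp a c a) a = 2 tp a c a - tp (tp a c a) c (tp a c a)
  have hasqa : tp a (tp a c a) a
      = tp a c a + tp a c a - tp (tp a c a) c (tp a c a) := by
    have J := jordan_identity (tp a c a) c a c a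
    rw [hacsq, tp_neg₁, tp_neg₃, hq2, symm_outer a c (tp a c a), hacsq] at J
    linear_combination (norm := module) J
  have hsq0 : tp a c a = 0 := by
    have J := jordan_identity a a a a a
    rw [haaa, symm_outer (tp a c a) a a, haasq, hasqa] at J
    have h2 : (2:ℂ) • tp a c a = 0 := by
      linear_combination (norm := module) J
    exact (smul_eq_zero.mp h2).resolve_left (by norm_num)
  apply eq_zero_of_cube
  rw [haaa, hsq0]

/-- Splitting lemma: with `a ∈ V₂` skew and `u₀ ∈ V₀`, tripotency of
`c + a + u₀` forces `a = 0` and `u₀` to be a tripotent. -/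
lemma part2 {a u₀ : V} (hDa : tp c c a = a) (hQa : tp c a c = -a)
    (hDu0 : tp c c u₀ = 0)
    (hcu : tp (c + a + u₀) (c + a + u₀) (c + a + u₀) = c + a + u₀) :
    a = 0 ∧ tp u₀ u₀ u₀ = u₀ ∧ (∀ z, tp u₀ c z = 0) := by
  have hS : ∀ z, tp u₀ c z = 0 := fun z => orthA hc hDu0 z
  have hT : ∀ z, tp c u₀ z = 0 := box_symm_zero hS
  have hu0a : ∀ z, tp u₀ a z = 0 := by
    intro z
    have J := jordan_identity a c u₀ c z
    rw [symm_outer a c u₀, hS a, tp_zero₁, hS z, tp_zero₃, hS (tp a c z),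
      hQa, tp_neg₂] at J
    linear_combination (norm := module) -J
  have hau0 : ∀ z, tp a u₀ z = 0 := box_symm_zero hu0a
  have hfu : ∀ z, tp u₀ (c + a) z = 0 := by
    intro z; rw [tpa₂, hS z, hu0a z, add_zero]
  have huf : ∀ z, tp (c + a) u₀ z = 0 := by
    intro z; rw [tpa₁, hT z, hau0 z, add_zero]
  -- split the tripotency
  have hsplit : tp (c + a) (c + a) (c + a) + tp u₀ u₀ u₀ = (c + a) + u₀ := by
    have h0 := hcu
    simp only [tpa₁, tpa₂, tpa₃] at h0
    -- kill mixed terms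
    rw [symm_outer c c u₀, symm_outer c a u₀, symm_outer a c u₀, symm_outer a a u₀,
      symm_outer u₀ u₀ c, symm_outer u₀ u₀ a] at h0
    simp only [hS, hT, hu0a, hau0] at h0
    simp only [tpa₁, tpa₂, tpa₃]
    linear_combination (norm := module) h0
  have hDf : tp c c (c + a) = c + a := by rw [tpa₃, hc, hDa]
  have hDfff : tp c c (tp (c + a) (c + a) (c + a)) = tp (c + a) (c + a) (c + a) := by
    have J := jordan_identity c c (c + a) (c + a) (c + a)
    rw [hDf] at J
    linear_combination (norm := module) J
  have hDu0c : tp c c (tp u₀ u₀ u₀) = 0 := by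
    have J := jordan_identity c c u₀ u₀ u₀
    rw [hDu0, tp_zero₁, tp_zero₂, tp_zero₃] at J
    linear_combination (norm := module) J
  have hf3 : tp (c + a) (c + a) (c + a) = c + a := by
    have h0 : tp c c (tp (c + a) (c + a) (c + a) + tp u₀ u₀ u₀)
        = tp c c (c + a + u₀) := congrArg (fun w => tp c c w) hsplit
    rw [tpa₃ c c (tp (c + a) (c + a) (c + a)) (tp u₀ u₀ u₀), hDfff, hDu0c,
      tpa₃ c c (c + a) u₀, hDf, hDu0] at h0
    linear_combination (norm := module) h0
  have hu3 : tp u₀ u₀ u₀ = u₀ := by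
    linear_combination (norm := module) hsplit - hf3
  exact ⟨skew_zero hc hDa hQa hf3, hu3, hS⟩

/-- Core lemma: if `c` and `c + u` are tripotents and `{c,u,c} + {c,c,u} = 0`,
then `u` is a tripotent orthogonal to `c`. -/
lemma main_aux {u : V} (hcu : tp (c + u) (c + u) (c + u) = c + u)
    (H : tp c u c + tp c c u = 0) :
    tp u u u = u ∧ ∀ x, tp u c x = 0 := by
  have hQu : tp c u c = -(tp c c u) := by linear_combination (norm := module) H
  have hDa : tp c c (tp c c u) = tp c c u := by
    have h0 := congrArg (fun w => tp c c w) H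
    simp only [tpa₃] at h0
    rw [LDQ hc u, tp_zero₃] at h0
    linear_combination (norm := module) h0 - H
  have hQa : tp c (tp c c u) c = -(tp c c u) := by
    rw [LQD hc u, hQu]
  have hDu0 : tp c c (u - tp c c u) = 0 := by
    rw [tp_sub₃, hDa, sub_self]
  have hform : c + u = c + tp c c u + (u - tp c c u) := by abel
  rw [hform] at hcu
  obtain ⟨ha0, hu3, hS⟩ := part2 hc hDa hQa hDu0 hcu
  rw [ha0, sub_zero] at hu3 hS
  exact ⟨hu3, hS⟩

end Tripotent

end JBStarTripleAux

/-- Let `c` and `e` be tripotents in a `JB*`-triple `V`.  Then `c ≤ e` (i.e. `e − c`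
is a tripotent orthogonal to `c`) if and only if `{c,e,c} + {c,c,e} = 2c`. -/
theorem stmt10 {V : Type*} [NormedAddCommGroup V] [NormedSpace ℂ V] [JBStarTriple V]
    (c e : V) (hc : IsTripotent c) (he : IsTripotent e) :
    TripLE c e ↔ tp c e c + tp c c e = (2 : ℂ) • c := by
  have hc' : tp c c c = c := hc
  have he' : tp e e e = e := he
  constructor
  · rintro ⟨h1, h2⟩
    have h3 := JBStarTripleAux.box_symm_zero h2
    have k1 : tp c e c = c := by
      have h4 := h3 c
      rw [JBStarTripleAux.tp_sub₂, hc'] at h4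
      linear_combination (norm := module) h4
    have k2 : tp c c e = c := by
      have h4 := h2 c
      rw [JBStarTripleAux.tp_sub₁, hc'] at h4
      rw [symm_outer c c e]
      linear_combination (norm := module) h4
    rw [k1, k2, two_smul]
  · intro h
    have hcu : tp (c + (e - c)) (c + (e - c)) (c + (e - c)) = c + (e - c) := by
      rw [show c + (e - c) = e by abel]
      exact he'
    have H : tp c (e - c) c + tp c c (e - c) = 0 := by
      rw [JBStarTripleAux.tp_sub₂, JBStarTripleAux.tp_sub₃, hc']
      linear_combination (norm := module) h
    obtain ⟨hu3, hS⟩ := JBStarTripleAux.main_aux hc' hcu H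
    exact ⟨hu3, hS⟩
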